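/- In a subcubic graph G with edge weights w, any two distinct problematic squares of G are vertex-disjoint. -/
import Mathlib


open Finset
open scoped Classical

namespace Paper

variable {V : Type*}

/-- `(a, b, c, d)` is a square (cycle of length 4) of `G`. -/
def IsSquare4 (G : SimpleGraph V) (a b c d : V) : Prop :=
  a ≠ b ∧ a ≠ c ∧ a ≠ d ∧ b ≠ c ∧ b ≠ d ∧ c ≠ d ∧
  G.Adj a b ∧ G.Adj b c ∧ G.Adj c d ∧ G.Adj d a

/-- The four native edges of the square `(a, b, c, d)`. -/
def sqEdges [DecidableEq V] (a b c d : V) : Finset (Sym2 V) :=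
  {s(a, b), s(b, c), s(c, d), s(d, a)}

/-- No square of `G` has all four of its native edges in `M`. -/
def SquareFree [DecidableEq V] (G : SimpleGraph V) (M : Finset (Sym2 V)) : Prop :=
  ∀ a b c d : V, IsSquare4 G a b c d → ¬ sqEdges a b c d ⊆ M

/-- The square `(a, b, c, d)` is unproblematic: there is another square `s'`
such that either they share exactly one edge, or they share two edges and
`w(s) ≤ w(s')`. -/
def SqUnprob [DecidableEq V] (G : SimpleGraph V) (w : Sym2 V → ℝ) (a b c d : V) : Prop :=
  ∃ a' b' c' d' : V, IsSquare4 G a' b' c' d' ∧ sqEdges a' b' c' d' ≠ sqEdges a b c d ∧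
    ((sqEdges a b c d ∩ sqEdges a' b' c' d').card = 1 ∨
     ((sqEdges a b c d ∩ sqEdges a' b' c' d').card = 2 ∧
       ∑ e ∈ sqEdges a b c d, w e ≤ ∑ e ∈ sqEdges a' b' c' d', w e))

/-- The square `(a, b, c, d)` is problematic. -/
def ProblemSq [DecidableEq V] (G : SimpleGraph V) (w : Sym2 V → ℝ) (a b c d : V) : Prop :=
  IsSquare4 G a b c d ∧ ¬ SqUnprob G w a b c d

lemma mem_sqEdges [DecidableEq V] {e : Sym2 V} {a b c d : V} :
    e ∈ sqEdges a b c d ↔ e = s(a,b) ∨ e = s(b,c) ∨ e = s(c,d) ∨ e = s(d,a) := by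
  simp [sqEdges]

lemma card_sqEdges [DecidableEq V] {a b c d : V}
    (hab : a ≠ b) (hac : a ≠ c) (had : a ≠ d) (hbc : b ≠ c) (hbd : b ≠ d) (hcd : c ≠ d) :
    (sqEdges a b c d).card = 4 := by
  rw [sqEdges]
  rw [card_insert_of_notMem, card_insert_of_notMem, card_insert_of_notMem,
    card_singleton] <;> simp [Sym2.eq_iff] <;> tauto

lemma path_close [DecidableEq V] {G : SimpleGraph V} {p q r t x y z u : V}
    (hsq : IsSquare4 G p q r t)
    (hxz : x ≠ z) (hyu : y ≠ u)
    (h1 : s(x,y) ∈ sqEdges p q r t) (h2 : s(y,z) ∈ sqEdges p q r t)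
    (h3 : s(z,u) ∈ sqEdges p q r t) :
    s(u,x) ∈ sqEdges p q r t := by
  obtain ⟨hpq, hpr, hpt, hqr, hqt, hrt, -⟩ := hsq
  simp only [mem_sqEdges, Sym2.eq_iff] at h1 h2 h3 ⊢
  rcases h1 with (⟨e1,e2⟩|⟨e1,e2⟩)|(⟨e1,e2⟩|⟨e1,e2⟩)|(⟨e1,e2⟩|⟨e1,e2⟩)|(⟨e1,e2⟩|⟨e1,e2⟩) <;>
  rcases h2 with (⟨f1,f2⟩|⟨f1,f2⟩)|(⟨f1,f2⟩|⟨f1,f2⟩)|(⟨f1,f2⟩|⟨f1,f2⟩)|(⟨f1,f2⟩|⟨f1,f2⟩) <;>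
  rcases h3 with (⟨g1,g2⟩|⟨g1,g2⟩)|(⟨g1,g2⟩|⟨g1,g2⟩)|(⟨g1,g2⟩|⟨g1,g2⟩)|(⟨g1,g2⟩|⟨g1,g2⟩) <;>
  subst_eqs <;> simp_all

lemma sqEdges_eq_of_subset [DecidableEq V] {G : SimpleGraph V} {a b c d p q r t : V}
    (hs : IsSquare4 G a b c d) (hs' : IsSquare4 G p q r t)
    (hss : sqEdges a b c d ⊆ sqEdges p q r t) :
    sqEdges a b c d = sqEdges p q r t := by
  obtain ⟨hab, hac, had, hbc, hbd, hcd, -⟩ := hs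
  obtain ⟨hpq, hpr, hpt, hqr, hqt, hrt, -⟩ := hs'
  exact Finset.eq_of_subset_of_card_le hss
    (by rw [card_sqEdges hpq hpr hpt hqr hqt hrt, card_sqEdges hab hac had hbc hbd hcd])

lemma incident [DecidableEq V] {G : SimpleGraph V} {a b c d v : V}
    (hs : IsSquare4 G a b c d) (hv : v ∈ ({a, b, c, d} : Finset V)) :
    ∃ x y : V, x ≠ y ∧ G.Adj v x ∧ G.Adj v y ∧
      s(v, x) ∈ sqEdges a b c d ∧ s(v, y) ∈ sqEdges a b c d := by
  obtain ⟨hab, hac, had, hbc, hbd, hcd, h1, h2, h3, h4⟩ := hs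
  simp only [mem_insert, mem_singleton] at hv
  rcases hv with rfl | rfl | rfl | rfl
  · exact ⟨b, d, hbd, h1, h4.symm, by simp [mem_sqEdges],
      by simp [mem_sqEdges, Sym2.eq_iff]⟩
  · exact ⟨a, c, hac, h1.symm, h2, by simp [mem_sqEdges, Sym2.eq_iff],
      by simp [mem_sqEdges]⟩
  · exact ⟨b, d, hbd, h2.symm, h3, by simp [mem_sqEdges, Sym2.eq_iff],
      by simp [mem_sqEdges]⟩
  · exact ⟨c, a, Ne.symm hac, h3.symm, h4, by simp [mem_sqEdges, Sym2.eq_iff],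
      by simp [mem_sqEdges]⟩

set_option maxHeartbeats 2000000

/-- In a subcubic graph `G` with edge weights `w`, any two
distinct problematic squares of `G` are vertex-disjoint. -/
theorem problematic_squares_disjoint {V : Type*} [Fintype V] [DecidableEq V]
    (G : SimpleGraph V) [DecidableRel G.Adj]
    (hsub : ∀ v : V, G.degree v ≤ 3) (w : Sym2 V → ℝ)
    (a b c d a' b' c' d' : V)
    (hp : ProblemSq G w a b c d) (hp' : ProblemSq G w a' b' c' d')
    (hne : sqEdges a b c d ≠ sqEdges a' b' c' d') :
    Disjoint ({a, b, c, d} : Finset V) ({a', b', c', d'} : Finset V) := by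
  obtain ⟨hs, hnu⟩ := hp
  obtain ⟨hs', hnu'⟩ := hp'
  set I := sqEdges a b c d ∩ sqEdges a' b' c' d' with hI
  -- the two failed unproblematic conditions
  have h1 : I.card ≠ 1 ∧ (I.card = 2 → ¬ ∑ e ∈ sqEdges a b c d, w e ≤
      ∑ e ∈ sqEdges a' b' c' d', w e) := by
    constructor
    · intro hc
      exact hnu ⟨a', b', c', d', hs', hne.symm, Or.inl hc⟩
    · intro hc hw
      exact hnu ⟨a', b', c', d', hs', hne.symm, Or.inr ⟨hc, hw⟩⟩
  have h2 : I.card ≠ 1 ∧ (I.card = 2 → ¬ ∑ e ∈ sqEdges a' b' c' d', w e ≤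
      ∑ e ∈ sqEdges a b c d, w e) := by
    have hcomm : sqEdges a' b' c' d' ∩ sqEdges a b c d = I := by rw [hI, inter_comm]
    constructor
    · intro hc
      exact hnu' ⟨a, b, c, d, hs, hne, Or.inl (hcomm ▸ hc)⟩
    · intro hc hw
      exact hnu' ⟨a, b, c, d, hs, hne, Or.inr ⟨hcomm ▸ hc, hw⟩⟩
  have hc2 : I.card ≠ 2 := fun hc => absurd (le_of_not_ge (h2.2 hc)) (h1.2 hc)
  obtain ⟨hab, hac, had, hbc, hbd, hcd, -⟩ := id hs
  -- card ≤ 2, else sqEdges would coincide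
  have hc3 : I.card ≤ 2 := by
    by_contra hgt
    push_neg at hgt
    have key : ∀ e1 e2 : Sym2 V, e1 ∈ sqEdges a b c d → e2 ∈ sqEdges a b c d → e1 ≠ e2 →
        e1 ∉ sqEdges a' b' c' d' → e2 ∉ sqEdges a' b' c' d' → False := by
      intro e1 e2 he1 he2 hne12 hn1 hn2
      have hss : I ⊆ (sqEdges a b c d) \ {e1, e2} := by
        intro e he
        simp only [hI, mem_inter] at he
        simp only [mem_sdiff, mem_insert, mem_singleton]
        refine ⟨he.1, ?_⟩
        rintro (rfl | rfl)
        · exact hn1 he.2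
        · exact hn2 he.2
      have h4 := card_sqEdges hab hac had hbc hbd hcd
      have hsub2 : ({e1, e2} : Finset (Sym2 V)) ⊆ sqEdges a b c d := by
        intro e he
        simp only [mem_insert, mem_singleton] at he
        rcases he with rfl | rfl
        exacts [he1, he2]
      have hcard2 : ({e1, e2} : Finset (Sym2 V)).card = 2 := by
        rw [card_insert_of_notMem (by simpa using hne12), card_singleton]
      have := card_le_card hss
      rw [card_sdiff_of_subset hsub2, hcard2, h4] at this
      omega
    have eab : s(a,b) ∈ sqEdges a b c d := by simp [mem_sqEdges]
    have ebc : s(b,c) ∈ sqEdges a b c d := by simp [mem_sqEdges]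
    have ecd : s(c,d) ∈ sqEdges a b c d := by simp [mem_sqEdges]
    have eda : s(d,a) ∈ sqEdges a b c d := by simp [mem_sqEdges]
    have n12 : s(a,b) ≠ s(b,c) := by simp only [ne_eq, Sym2.eq_iff]; tauto
    have n13 : s(a,b) ≠ s(c,d) := by simp only [ne_eq, Sym2.eq_iff]; tauto
    have n14 : s(a,b) ≠ s(d,a) := by simp only [ne_eq, Sym2.eq_iff]; tauto
    have n23 : s(b,c) ≠ s(c,d) := by simp only [ne_eq, Sym2.eq_iff]; tauto
    have n24 : s(b,c) ≠ s(d,a) := by simp only [ne_eq, Sym2.eq_iff]; tauto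
    have n34 : s(c,d) ≠ s(d,a) := by simp only [ne_eq, Sym2.eq_iff]; tauto
    have hall : s(a,b) ∈ sqEdges a' b' c' d' → s(b,c) ∈ sqEdges a' b' c' d' →
        s(c,d) ∈ sqEdges a' b' c' d' → s(d,a) ∈ sqEdges a' b' c' d' → False := by
      intro p1 p2 p3 p4
      refine hne (sqEdges_eq_of_subset hs hs' ?_)
      intro e he
      rw [mem_sqEdges] at he
      rcases he with rfl | rfl | rfl | rfl <;> assumption
    by_cases m1 : s(a,b) ∈ sqEdges a' b' c' d' <;>
    by_cases m2 : s(b,c) ∈ sqEdges a' b' c' d' <;>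
    by_cases m3 : s(c,d) ∈ sqEdges a' b' c' d' <;>
    by_cases m4 : s(d,a) ∈ sqEdges a' b' c' d'
    all_goals try exact hall m1 m2 m3 m4
    all_goals try exact hall (path_close hs' hbd (Ne.symm hac) m2 m3 m4) m2 m3 m4
    all_goals try exact hall m1 (path_close hs' (Ne.symm hac) (Ne.symm hbd) m3 m4 m1) m3 m4
    all_goals try exact hall m1 m2 (path_close hs' (Ne.symm hbd) hac m4 m1 m2) m4
    all_goals try exact hall m1 m2 m3 (path_close hs' hac hbd m1 m2 m3)
    all_goals try exact key _ _ eab ebc n12 m1 m2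
    all_goals try exact key _ _ eab ecd n13 m1 m3
    all_goals try exact key _ _ eab eda n14 m1 m4
    all_goals try exact key _ _ ebc ecd n23 m2 m3
    all_goals try exact key _ _ ebc eda n24 m2 m4
    all_goals exact key _ _ ecd eda n34 m3 m4
  have hI0 : I.card = 0 := by omega
  have hdisj : ∀ e : Sym2 V, e ∈ sqEdges a b c d → e ∉ sqEdges a' b' c' d' := by
    intro e he he'
    have : e ∈ I := by rw [hI, mem_inter]; exact ⟨he, he'⟩
    rw [card_eq_zero.mp hI0] at this
    exact absurd this (notMem_empty e)
  -- vertex disjointness via the degree bound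
  rw [Finset.disjoint_left]
  intro v hv hv'
  obtain ⟨x, y, hxy, hax, hay, hex, hey⟩ := incident hs hv
  obtain ⟨x', y', hxy', hax', hay', hex', hey'⟩ := incident hs' hv'
  have hxx' : x ≠ x' := fun h => hdisj _ hex (h ▸ hex')
  have hxy'2 : x ≠ y' := fun h => hdisj _ hex (h ▸ hey')
  have hyx' : y ≠ x' := fun h => hdisj _ hey (h ▸ hex')
  have hyy' : y ≠ y' := fun h => hdisj _ hey (h ▸ hey')
  have hss : ({x, y, x', y'} : Finset V) ⊆ G.neighborFinset v := by
    intro z hz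
    simp only [mem_insert, mem_singleton] at hz
    rw [SimpleGraph.mem_neighborFinset]
    rcases hz with rfl | rfl | rfl | rfl
    exacts [hax, hay, hax', hay']
  have hcard : ({x, y, x', y'} : Finset V).card = 4 := by
    rw [card_insert_of_notMem (by simp [hxy, hxx', hxy'2]),
      card_insert_of_notMem (by simp [hyx', hyy']),
      card_insert_of_notMem (by simp [hxy']), card_singleton]
  have := card_le_card hss
  rw [hcard, SimpleGraph.card_neighborFinset_eq_degree] at this
  have := hsub v
  omega
end Paper
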